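/- Let μ be supported on ℤ⁺, μ' on ℤ⁻. Define ν(n) = μ'(]-∞, n]) for n ≤ -1 and ν(n) = μ([n+1, ∞[) for n ≥ 0, and ρ(n) = Σ_{k≥0} A'(-k) ν(n+k) for n ≥ 0 where A'(-k) = δ_0(-k) − μ'(-k). Then for all n ≥ 0, ρ(n) = Σ_{k=1}^∞ μ'(-k) μ([n+1, n+k]). -/

import Mathlib

/-- With `μ` supported on ℤ⁺ and `μ'` on ℤ⁻, `ν(n) = μ([n+1,∞[)` for `n ≥ 0`, and
`A'(-k) = δ₀(-k) - μ'(-k)`, one has, for all `n ≥ 0`,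
`∑_{k≥0} A'(-k) ν(n+k) = ∑_{k≥1} μ'(-k) μ([n+1, n+k])`. -/
theorem stmt_13 (μ μ' : ℤ → ℝ)
    (hμpos : ∀ k, 0 ≤ μ k) (hμ'pos : ∀ k, 0 ≤ μ' k)
    (hμmass : ∑' k : ℤ, μ k = 1) (hμ'mass : ∑' k : ℤ, μ' k = 1)
    (hμsupp : ∀ k : ℤ, k ≤ 0 → μ k = 0) (hμ'supp : ∀ k : ℤ, 0 ≤ k → μ' k = 0)
    (ν : ℤ → ℝ) (hν : ∀ m : ℤ, 0 ≤ m → ν m = ∑' j : ℕ, μ (m + 1 + (j : ℤ))) :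
    ∀ n : ℕ,
      (∑' k : ℕ, ((if k = 0 then (1 : ℝ) else 0) - μ' (-(k : ℤ))) * ν ((n : ℤ) + k))
        = ∑' k : ℕ, μ' (-(k : ℤ) - 1) *
            ∑ j ∈ Finset.Icc ((n : ℤ) + 1) ((n : ℤ) + (k : ℤ) + 1), μ j := by
  intro n
  have hμsum : Summable μ := by
    by_contra h
    rw [tsum_eq_zero_of_not_summable h] at hμmass; norm_num at hμmass
  have hμ'sum : Summable μ' := by
    by_contra h
    rw [tsum_eq_zero_of_not_summable h] at hμ'mass; norm_num at hμ'mass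
  -- summability of shifted μ'
  have hf1sum : Summable (fun k : ℕ => μ' (-(k : ℤ) - 1)) :=
    hμ'sum.comp_injective (fun a b hab => by omega)
  have hf0sum : Summable (fun k : ℕ => μ' (-(k : ℤ))) :=
    hμ'sum.comp_injective (fun a b hab => by omega)
  -- ν bounds
  have hνnonneg : ∀ m : ℤ, 0 ≤ m → 0 ≤ ν m := by
    intro m hm
    rw [hν m hm]
    exact tsum_nonneg fun j => hμpos _
  have hνle : ∀ m : ℤ, 0 ≤ m → ν m ≤ 1 := by
    intro m hm
    rw [hν m hm, ← hμmass]
    have hinj : Function.Injective (fun j : ℕ => m + 1 + (j : ℤ)) := fun a b hab => by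
      exact_mod_cast add_left_cancel hab
    exact (hμsum.comp_injective hinj).tsum_le_tsum_of_inj (fun j : ℕ => m + 1 + (j : ℤ))
      hinj (fun c _ => hμpos c) (fun j => le_refl _)
      hμsum
  -- one-step decomposition of ν
  have hstep : ∀ m : ℤ, 0 ≤ m → ν m = μ (m + 1) + ν (m + 1) := by
    intro m hm
    have hinj : Function.Injective (fun j : ℕ => m + 1 + (j : ℤ)) := fun a b hab => by
      exact_mod_cast add_left_cancel hab
    have hsum : Summable (fun j : ℕ => μ (m + 1 + (j : ℤ))) := hμsum.comp_injective hinj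
    rw [hν m hm, hν (m + 1) (by omega),
      Summable.tsum_eq_zero_add (f := fun j : ℕ => μ (m + 1 + (j : ℤ))) hsum]
    congr 1
    · norm_num
    · exact tsum_congr fun j => by congr 1; push_cast; ring
  -- telescoping decomposition
  have hdec : ∀ k : ℕ, ν (n : ℤ) =
      (∑ j ∈ Finset.Icc ((n : ℤ) + 1) ((n : ℤ) + (k : ℤ) + 1), μ j) + ν ((n : ℤ) + k + 1) := by
    intro k
    induction k with
    | zero =>
      simp only [Nat.cast_zero, add_zero]
      rw [hstep (n : ℤ) (by positivity), Finset.Icc_self, Finset.sum_singleton]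
    | succ k ih =>
      have h1 : Finset.Icc ((n : ℤ) + 1) ((n : ℤ) + ((k : ℤ) + 1) + 1) =
          insert ((n : ℤ) + (k : ℤ) + 2) (Finset.Icc ((n : ℤ) + 1) ((n : ℤ) + (k : ℤ) + 1)) := by
        ext x; simp [Finset.mem_Icc]; omega
      push_cast
      rw [h1, Finset.sum_insert (by simp [Finset.mem_Icc])]
      rw [ih, hstep ((n : ℤ) + k + 1) (by positivity)]
      ring_nf
  have hgle : ∀ k : ℕ, ν ((n : ℤ) + k + 1) ≤ 1 := fun k => hνle _ (by positivity)
  have hgnn : ∀ k : ℕ, 0 ≤ ν ((n : ℤ) + k + 1) := fun k => hνnonneg _ (by positivity)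
  -- summability of products
  have hprodsum : Summable (fun k : ℕ => μ' (-(k : ℤ) - 1) * ν ((n : ℤ) + k + 1)) := by
    apply Summable.of_nonneg_of_le (fun k => mul_nonneg (hμ'pos _) (hgnn k))
      (fun k => by
        calc μ' (-(k : ℤ) - 1) * ν ((n : ℤ) + k + 1) ≤ μ' (-(k : ℤ) - 1) * 1 :=
          mul_le_mul_of_nonneg_left (hgle k) (hμ'pos _)
        _ = μ' (-(k : ℤ) - 1) := mul_one _) hf1sum
  have hprodsum0 : Summable (fun k : ℕ => μ' (-(k : ℤ)) * ν ((n : ℤ) + k)) := by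
    apply Summable.of_nonneg_of_le
      (fun k => mul_nonneg (hμ'pos _) (hνnonneg _ (by positivity)))
      (fun k => by
        calc μ' (-(k : ℤ)) * ν ((n : ℤ) + k) ≤ μ' (-(k : ℤ)) * 1 :=
          mul_le_mul_of_nonneg_left (hνle _ (by positivity)) (hμ'pos _)
        _ = μ' (-(k : ℤ)) := mul_one _) hf0sum
  -- total mass of shifted μ'
  have hmass1 : (∑' k : ℕ, μ' (-(k : ℤ) - 1)) = 1 := by
    have hnat : Summable (fun k : ℕ => μ' (k : ℤ)) :=
      hμ'sum.comp_injective (fun a b hab => by omega)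
    have h2 : (fun k : ℕ => μ' (-((k : ℤ) + 1))) = fun k : ℕ => μ' (-(k : ℤ) - 1) := by
      funext k; congr 1; ring
    have hz : (∑' k : ℕ, μ' (k : ℤ)) = 0 := by
      rw [show (fun k : ℕ => μ' (k : ℤ)) = fun _ => (0 : ℝ) from
        funext fun k => hμ'supp _ (by positivity)]
      exact tsum_zero
    have := tsum_of_nat_of_neg_add_one (f := μ') hnat (by rw [h2]; exact hf1sum)
    rw [hμ'mass, hz, zero_add, h2] at this
    exact this.symm
  -- compute LHS
  have hδ : (∑' k : ℕ, (if k = 0 then (1 : ℝ) else 0) * ν ((n : ℤ) + k)) = ν (n : ℤ) := by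
    rw [show (fun k : ℕ => (if k = 0 then (1 : ℝ) else 0) * ν ((n : ℤ) + k)) =
        fun k : ℕ => if k = 0 then ν (n : ℤ) else 0 by
      funext k; split <;> simp_all]
    exact tsum_ite_eq 0 (fun _ => ν (n : ℤ))
  have hδsum : Summable (fun k : ℕ => (if k = 0 then (1 : ℝ) else 0) * ν ((n : ℤ) + k)) := by
    rw [show (fun k : ℕ => (if k = 0 then (1 : ℝ) else 0) * ν ((n : ℤ) + k)) =
        fun k : ℕ => if k = 0 then ν (n : ℤ) else 0 by
      funext k; split <;> simp_all]
    exact summable_of_ne_finset_zero (s := {0}) (fun k hk => by simp at hk; simp [hk])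
  have hshift : (∑' k : ℕ, μ' (-(k : ℤ)) * ν ((n : ℤ) + k))
      = ∑' k : ℕ, μ' (-(k : ℤ) - 1) * ν ((n : ℤ) + k + 1) := by
    rw [Summable.tsum_eq_zero_add hprodsum0]
    simp only [Nat.cast_zero, neg_zero, Nat.cast_add, Nat.cast_one]
    rw [hμ'supp 0 le_rfl, zero_mul, zero_add]
    exact tsum_congr fun k => by
      rw [show -((k : ℤ) + 1) = -(k : ℤ) - 1 by ring,
        show (n : ℤ) + ((k : ℤ) + 1) = (n : ℤ) + k + 1 by ring]
  have hLHS : (∑' k : ℕ, ((if k = 0 then (1 : ℝ) else 0) - μ' (-(k : ℤ))) * ν ((n : ℤ) + k))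
      = ν (n : ℤ) - ∑' k : ℕ, μ' (-(k : ℤ) - 1) * ν ((n : ℤ) + k + 1) := by
    have : (fun k : ℕ => ((if k = 0 then (1 : ℝ) else 0) - μ' (-(k : ℤ))) * ν ((n : ℤ) + k))
        = fun k : ℕ => (if k = 0 then (1 : ℝ) else 0) * ν ((n : ℤ) + k)
            - μ' (-(k : ℤ)) * ν ((n : ℤ) + k) := by
      funext k; ring
    rw [this, Summable.tsum_sub hδsum hprodsum0, hδ, hshift]
  rw [hLHS]
  -- compute RHS
  have hRHS : (∑' k : ℕ, μ' (-(k : ℤ) - 1) *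
      ∑ j ∈ Finset.Icc ((n : ℤ) + 1) ((n : ℤ) + (k : ℤ) + 1), μ j)
      = ν (n : ℤ) - ∑' k : ℕ, μ' (-(k : ℤ) - 1) * ν ((n : ℤ) + k + 1) := by
    have hterm : (fun k : ℕ => μ' (-(k : ℤ) - 1) *
        ∑ j ∈ Finset.Icc ((n : ℤ) + 1) ((n : ℤ) + (k : ℤ) + 1), μ j)
        = fun k : ℕ => μ' (-(k : ℤ) - 1) * ν (n : ℤ)
            - μ' (-(k : ℤ) - 1) * ν ((n : ℤ) + k + 1) := by
      funext k
      have := hdec k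
      have h2 : (∑ j ∈ Finset.Icc ((n : ℤ) + 1) ((n : ℤ) + (k : ℤ) + 1), μ j)
          = ν (n : ℤ) - ν ((n : ℤ) + k + 1) := by linarith
      rw [h2]; ring
    rw [hterm, Summable.tsum_sub (hf1sum.mul_right _) hprodsum, tsum_mul_right, hmass1, one_mul]
  rw [hRHS]
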